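/- Fix masses m, M with 2M > m > 0. There exists C > 0, depending only on m and M, such that for all nonzero ξ₁, ξ₂ ∈ ℝ³ and all signs s₁, s₂ ∈ {+1,−1}: |μ^{s₁,s₂}(ξ₁,ξ₂)| ≥ C⁻¹ min(⟨ξ₁⟩, ⟨ξ₂⟩) · ∠(s₁ξ₁, s₂ξ₂)², where ⟨·⟩ := ⟨·⟩₁. -/

import Mathlib

open Real

set_option maxHeartbeats 1000000


noncomputable section

/-- The Japanese bracket `⟨ξ⟩_a := √(|ξ|² + a²)` for `ξ ∈ ℝ³`, `a ≥ 0`. -/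
def jbracket (a : ℝ) (ξ : EuclideanSpace ℝ (Fin 3)) : ℝ :=
  Real.sqrt (‖ξ‖ ^ 2 + a ^ 2)

/-- The resonance function `μ^{s₁,s₂}(ξ₁,ξ₂) := ⟨ξ₁−ξ₂⟩_m + s₁⟨ξ₁⟩_M − s₂⟨ξ₂⟩_M`. -/
def resonance (m M s₁ s₂ : ℝ) (ξ₁ ξ₂ : EuclideanSpace ℝ (Fin 3)) : ℝ :=
  jbracket m (ξ₁ - ξ₂) + s₁ * jbracket M ξ₁ - s₂ * jbracket M ξ₂

lemma jordan (θ : ℝ) (h0 : 0 ≤ θ) (h1 : θ ≤ π) :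
    2 / π ^ 2 * θ ^ 2 ≤ 1 - Real.cos θ := by
  have hπ : 0 < π := Real.pi_pos
  have hs : θ / π ≤ Real.sin (θ / 2) := by
    have h := Real.mul_le_sin (x := θ / 2) (by linarith) (by linarith)
    calc θ / π = 2 / π * (θ / 2) := by field_simp
    _ ≤ Real.sin (θ / 2) := h
  have hpyth := Real.sin_sq_add_cos_sq (θ / 2)
  have hcos : Real.cos θ = Real.cos (θ / 2) ^ 2 - Real.sin (θ / 2) ^ 2 := by
    rw [← Real.cos_two_mul']
    congr 1
    ring
  have h2 : 1 - Real.cos θ = 2 * Real.sin (θ / 2) ^ 2 := by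
    rw [hcos]; linear_combination (-1 : ℝ) * hpyth
  rw [h2]
  have h4 : (θ / π) ^ 2 ≤ Real.sin (θ / 2) ^ 2 :=
    pow_le_pow_left₀ (by positivity) hs _
  calc 2 / π ^ 2 * θ ^ 2 = 2 * (θ / π) ^ 2 := by field_simp
  _ ≤ 2 * Real.sin (θ / 2) ^ 2 := by linarith

lemma ge_sqrt_aux (x k : ℝ) (hk : 0 ≤ k) : k ≤ Real.sqrt (x ^ 2 + k ^ 2) := by
  calc k = Real.sqrt (k ^ 2) := (Real.sqrt_sq hk).symm
  _ ≤ _ := Real.sqrt_le_sqrt (by linarith [sq_nonneg x])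


lemma ge_sqrt_aux' (x k : ℝ) (hx : 0 ≤ x) : x ≤ Real.sqrt (x ^ 2 + k ^ 2) := by
  calc x = Real.sqrt (x ^ 2) := (Real.sqrt_sq hx).symm
  _ ≤ _ := Real.sqrt_le_sqrt (by linarith [sq_nonneg k])

lemma sqrt_add_le_aux (x k : ℝ) (hx : 0 ≤ x) (hk : 0 ≤ k) :
    Real.sqrt (x ^ 2 + k ^ 2) ≤ x + k := by
  calc Real.sqrt (x ^ 2 + k ^ 2) ≤ Real.sqrt ((x + k) ^ 2) :=
    Real.sqrt_le_sqrt (by nlinarith [mul_nonneg hx hk])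
  _ = x + k := Real.sqrt_sq (by linarith)

lemma scalar_key (m M : ℝ) (hm : 0 < m) (hM : 0 < M) (hmM : m < 2 * M) :
    ∃ c₀ > (0 : ℝ), ∀ r₁ r₂ t θ s₁ s₂ : ℝ, 0 < r₁ → 0 < r₂ → r₁ ≤ r₂ →
      -1 ≤ t → t ≤ 1 → 0 ≤ θ → θ ≤ π → 2 / π ^ 2 * θ ^ 2 ≤ 1 - t →
      (s₁ = 1 ∨ s₁ = -1) → (s₂ = 1 ∨ s₂ = -1) →
      c₀ * Real.sqrt (r₁ ^ 2 + 1) * θ ^ 2 ≤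
        |Real.sqrt (r₁ ^ 2 + r₂ ^ 2 - 2 * (s₁ * s₂) * (r₁ * r₂) * t + m ^ 2)
          + s₁ * Real.sqrt (r₁ ^ 2 + M ^ 2) - s₂ * Real.sqrt (r₂ ^ 2 + M ^ 2)| := by
  have hπ : 0 < π := Real.pi_pos
  have hM4 : 0 < 4 * M ^ 2 - m ^ 2 := by nlinarith
  obtain ⟨η, hη0, hη1, hηa, hηb⟩ :
      ∃ η : ℝ, 0 < η ∧ η ≤ 1 ∧ η * M ^ 2 ≤ m ^ 2 ∧ η * M ^ 2 ≤ 4 * M ^ 2 - m ^ 2 := by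
    refine ⟨m ^ 2 * (4 * M ^ 2 - m ^ 2) / (8 * M ^ 4), div_pos (mul_pos (by positivity) hM4) (by positivity), ?_, ?_, ?_⟩
    · rw [div_le_one (by positivity)]
      nlinarith [sq_nonneg (m ^ 2 - 2 * M ^ 2)]
    · rw [div_mul_eq_mul_div, div_le_iff₀ (by positivity)]
      nlinarith [mul_nonneg (mul_nonneg (sq_nonneg m) (sq_nonneg M)) (by positivity : (0:ℝ) ≤ 4 * M ^ 2 + m ^ 2)]
    · rw [div_mul_eq_mul_div, div_le_iff₀ (by positivity)]
      nlinarith [mul_nonneg (mul_nonneg hM4.le (sq_nonneg M)) (by nlinarith : (0:ℝ) ≤ 8 * M ^ 2 - m ^ 2)]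
  obtain ⟨R₀, hR₀, hR₀eq⟩ : ∃ R₀ : ℝ, 0 < R₀ ∧ R₀ = 1 + 2 * M + m :=
    ⟨1 + 2 * M + m, by linarith, rfl⟩
  have hDB : 0 < (1 + R₀) * π ^ 2 * ((4 * R₀ + 2 * M + m) * (M + 2 * R₀)) := by
    apply mul_pos (mul_pos (by linarith) (by positivity))
    apply mul_pos (by linarith) (by linarith)
  obtain ⟨cB, hcB, hcBeq⟩ :
      ∃ cB : ℝ, 0 < cB ∧ cB * ((1 + R₀) * π ^ 2 * ((4 * R₀ + 2 * M + m) * (M + 2 * R₀))) = η * M ^ 3 :=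
    ⟨η * M ^ 3 / ((1 + R₀) * π ^ 2 * ((4 * R₀ + 2 * M + m) * (M + 2 * R₀))),
      div_pos (by positivity) hDB, div_mul_cancel₀ _ (ne_of_gt hDB)⟩
  obtain ⟨cA1, hcA1, hcA1eq⟩ :
      ∃ cA1 : ℝ, 0 < cA1 ∧ cA1 * (10 * (M + 2) * π ^ 2) = η * M ^ 2 :=
    ⟨η * M ^ 2 / (10 * (M + 2) * π ^ 2), div_pos (by positivity) (by positivity),
      div_mul_cancel₀ _ (by positivity)⟩
  obtain ⟨cA2, hcA2, hcA2eq⟩ :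
      ∃ cA2 : ℝ, 0 < cA2 ∧ cA2 * (5 * (M + 2) * π ^ 2) = 2 * η :=
    ⟨2 * η / (5 * (M + 2) * π ^ 2), div_pos (by positivity) (by positivity),
      div_mul_cancel₀ _ (by positivity)⟩
  refine ⟨min cB (min cA1 cA2), lt_min hcB (lt_min hcA1 hcA2), ?_⟩
  set c₀ := min cB (min cA1 cA2) with hc₀def
  have hc₀ : 0 < c₀ := lt_min hcB (lt_min hcA1 hcA2)
  have hc₀B : c₀ ≤ cB := min_le_left _ _
  have hc₀A1 : c₀ ≤ cA1 := le_trans (min_le_right _ _) (min_le_left _ _)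
  have hc₀A2 : c₀ ≤ cA2 := le_trans (min_le_right _ _) (min_le_right _ _)
  clear_value c₀
  clear hc₀def
  intro r₁ r₂ t θ s₁ s₂ hr₁ hr₂ hr₁₂ ht₁ ht₂ hθ0 hθπ hJ hs₁ hs₂
  have hs₁sq : s₁ ^ 2 = 1 := by rcases hs₁ with rfl | rfl <;> norm_num
  have hs₂sq : s₂ ^ 2 = 1 := by rcases hs₂ with rfl | rfl <;> norm_num
  have hεor : s₁ * s₂ = 1 ∨ s₁ * s₂ = -1 := by
    rcases hs₁ with rfl | rfl <;> rcases hs₂ with rfl | rfl <;> norm_num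
  set a := Real.sqrt (r₁ ^ 2 + M ^ 2) with ha
  set b := Real.sqrt (r₂ ^ 2 + M ^ 2) with hb
  have ha0 : 0 ≤ a := Real.sqrt_nonneg _
  have hb0 : 0 ≤ b := Real.sqrt_nonneg _
  have ha2 : a ^ 2 = r₁ ^ 2 + M ^ 2 := Real.sq_sqrt (by positivity)
  have hb2 : b ^ 2 = r₂ ^ 2 + M ^ 2 := Real.sq_sqrt (by positivity)
  have haM : M ≤ a := ge_sqrt_aux r₁ M hM.le
  have hbM : M ≤ b := ge_sqrt_aux r₂ M hM.le
  have har : r₁ ≤ a := ge_sqrt_aux' r₁ M hr₁.le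
  have hbr : r₂ ≤ b := ge_sqrt_aux' r₂ M hr₂.le
  have haub : a ≤ r₁ + M := sqrt_add_le_aux r₁ M hr₁.le hM.le
  have hbub : b ≤ r₂ + M := sqrt_add_le_aux r₂ M hr₂.le hM.le
  have hεt : (s₁ * s₂) * t ≤ 1 := by rcases hεor with h | h <;> rw [h] <;> linarith
  have hεt' : -1 ≤ (s₁ * s₂) * t := by rcases hεor with h | h <;> rw [h] <;> linarith
  have hrr : 0 < r₁ * r₂ := mul_pos hr₁ hr₂
  have hd20 : 0 ≤ r₁ ^ 2 + r₂ ^ 2 - 2 * (s₁ * s₂) * (r₁ * r₂) * t := by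
    have h := mul_le_mul_of_nonneg_left hεt hrr.le
    linarith [sq_nonneg (r₁ - r₂)]
  set c := Real.sqrt (r₁ ^ 2 + r₂ ^ 2 - 2 * (s₁ * s₂) * (r₁ * r₂) * t + m ^ 2) with hc
  have hc0 : 0 ≤ c := Real.sqrt_nonneg _
  have hc2 : c ^ 2 = r₁ ^ 2 + r₂ ^ 2 - 2 * (s₁ * s₂) * (r₁ * r₂) * t + m ^ 2 :=
    Real.sq_sqrt (by linarith [hd20, sq_nonneg m])
  have hcm : m ≤ c := by
    rw [hc]
    calc m = Real.sqrt (m ^ 2) := (Real.sqrt_sq hm.le).symm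
    _ ≤ _ := Real.sqrt_le_sqrt (by linarith [hd20])
  have hcub : c ≤ r₁ + r₂ + m := by
    rw [hc]
    calc Real.sqrt (r₁ ^ 2 + r₂ ^ 2 - 2 * (s₁ * s₂) * (r₁ * r₂) * t + m ^ 2)
        ≤ Real.sqrt ((r₁ + r₂ + m) ^ 2) := by
          apply Real.sqrt_le_sqrt
          have h := mul_le_mul_of_nonneg_left hεt' hrr.le
          linarith [mul_pos (add_pos hr₁ hr₂) hm, h]
    _ = r₁ + r₂ + m := Real.sqrt_sq (by positivity)
  set μ := c + s₁ * a - s₂ * b with hμ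
  set X := c - s₁ * a + s₂ * b with hX
  have hprod : μ * X = m ^ 2 - 2 * M ^ 2 - 2 * (s₁ * s₂) * (r₁ * r₂) * t
      + 2 * (s₁ * s₂) * (a * b) := by
    rw [hμ, hX]
    linear_combination hc2 - a ^ 2 * hs₁sq - b ^ 2 * hs₂sq - ha2 - hb2
  have hab : r₁ * r₂ + M ^ 2 ≤ a * b := by
    have h1 : a * b = Real.sqrt ((r₁ ^ 2 + M ^ 2) * (r₂ ^ 2 + M ^ 2)) :=
      (Real.sqrt_mul (by positivity) _).symm
    have h2 : r₁ * r₂ + M ^ 2 = Real.sqrt ((r₁ * r₂ + M ^ 2) ^ 2) :=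
      (Real.sqrt_sq (by positivity)).symm
    rw [h1, h2]
    apply Real.sqrt_le_sqrt
    linarith [mul_nonneg (sq_nonneg M) (sq_nonneg (r₁ - r₂))]
  have hF2 : M ^ 2 * b ≤ (a * b - r₁ * r₂) * (a + r₁) := by
    have e : (a * b - r₁ * r₂) * (a + r₁) - M ^ 2 * b
        = (a + r₁) * r₁ * (b - r₂) + b * (a ^ 2 - (r₁ ^ 2 + M ^ 2)) := by ring
    have e2 : (a * b - r₁ * r₂) * (a + r₁) - M ^ 2 * b = (a + r₁) * r₁ * (b - r₂) := by
      rw [e, ha2]; ring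
    have h3 : 0 ≤ (a + r₁) * r₁ * (b - r₂) :=
      mul_nonneg (mul_nonneg (by linarith) hr₁.le) (by linarith)
    linarith
  have hP1 : M ^ 2 * (a + r₁) ≤ (a * b - r₁ * r₂) * (a + r₁) :=
    mul_le_mul_of_nonneg_right (by linarith) (by linarith)
  have hT0 : 0 ≤ 2 * (r₁ * r₂) * (1 - t) := by
    apply mul_nonneg (by linarith) (by linarith)
  have hT'0 : 0 ≤ 2 * (r₁ * r₂) * (1 - t) * (a + r₁) := mul_nonneg hT0 (by linarith)
  -- step: |μ X| * (a + r₁) ≥ η (M² b + T (a+r₁))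
  have hstep : η * (M ^ 2 * b + 2 * (r₁ * r₂) * (1 - t) * (a + r₁)) ≤ |μ * X| * (a + r₁) := by
    rcases hεor with hε | hε
    · rw [hε] at hprod
      have hpos : 0 < μ * X := by
        have h := mul_le_mul_of_nonneg_left ht₂ hrr.le
        linarith [hprod, hab, h, mul_pos hm hm]
      rw [abs_of_pos hpos]
      have hid : (μ * X) * (a + r₁) = (m ^ 2 - 2 * M ^ 2) * (a + r₁)
          + 2 * ((a * b - r₁ * r₂) * (a + r₁)) + 2 * (r₁ * r₂) * (1 - t) * (a + r₁) := by
        linear_combination (a + r₁) * hprod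
      have k1 : 0 ≤ η * ((a * b - r₁ * r₂) * (a + r₁) - M ^ 2 * b) :=
        mul_nonneg hη0.le (by linarith)
      have k2 : 0 ≤ (2 - η) * ((a * b - r₁ * r₂) * (a + r₁) - M ^ 2 * (a + r₁)) :=
        mul_nonneg (by linarith) (by linarith)
      have k3 : 0 ≤ (1 - η) * (2 * (r₁ * r₂) * (1 - t) * (a + r₁)) :=
        mul_nonneg (by linarith) hT'0
      have k4 : 0 ≤ (m ^ 2 - η * M ^ 2) * (a + r₁) :=
        mul_nonneg (by linarith) (by linarith)
      linarith [k1, k2, k3, k4, hid]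
    · rw [hε] at hprod
      have hneg : μ * X < 0 := by
        have h := mul_le_mul_of_nonneg_left ht₂ hrr.le
        linarith [hprod, hab, h, hM4, mul_pos hm hm]
      rw [abs_of_neg hneg]
      have hid : (-(μ * X)) * (a + r₁) = (2 * M ^ 2 - m ^ 2) * (a + r₁)
          + 2 * ((a * b - r₁ * r₂) * (a + r₁)) + 2 * (r₁ * r₂) * (1 - t) * (a + r₁) := by
        linear_combination (-(a + r₁)) * hprod
      have k1 : 0 ≤ η * ((a * b - r₁ * r₂) * (a + r₁) - M ^ 2 * b) :=
        mul_nonneg hη0.le (by linarith)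
      have k2 : 0 ≤ (2 - η) * ((a * b - r₁ * r₂) * (a + r₁) - M ^ 2 * (a + r₁)) :=
        mul_nonneg (by linarith) (by linarith)
      have k3 : 0 ≤ (1 - η) * (2 * (r₁ * r₂) * (1 - t) * (a + r₁)) :=
        mul_nonneg (by linarith) hT'0
      have k4 : 0 ≤ (4 * M ^ 2 - m ^ 2 - η * M ^ 2) * (a + r₁) :=
        mul_nonneg (by linarith) (by linarith)
      linarith [k1, k2, k3, k4, hid]
  -- |X| ≤ a + b + c
  have habs1 : |s₁| = 1 := by rcases hs₁ with rfl | rfl <;> norm_num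
  have habs2 : |s₂| = 1 := by rcases hs₂ with rfl | rfl <;> norm_num
  have hXle : |X| ≤ a + b + c := by
    have e : X = c + (-(s₁ * a)) + s₂ * b := by rw [hX]; ring
    rw [e]
    refine (abs_add_three _ _ _).trans ?_
    rw [abs_neg, abs_mul, abs_mul, habs1, habs2, abs_of_nonneg hc0,
      abs_of_nonneg ha0, abs_of_nonneg hb0]
    linarith
  have hcomb : η * (M ^ 2 * b + 2 * (r₁ * r₂) * (1 - t) * (a + r₁))
      ≤ |μ| * ((a + b + c) * (a + r₁)) := by
    calc η * (M ^ 2 * b + 2 * (r₁ * r₂) * (1 - t) * (a + r₁)) ≤ |μ * X| * (a + r₁) := hstep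
    _ = |μ| * |X| * (a + r₁) := by rw [abs_mul]
    _ ≤ |μ| * (a + b + c) * (a + r₁) := by
        apply mul_le_mul_of_nonneg_right (mul_le_mul_of_nonneg_left hXle (abs_nonneg _))
        linarith
    _ = |μ| * ((a + b + c) * (a + r₁)) := by ring
  -- core constant inequality
  have hθsq : θ ^ 2 ≤ π ^ 2 := by
    rw [sq, sq]; exact mul_self_le_mul_self hθ0 hθπ
  have habc : a + b + c ≤ 2 * r₁ + 2 * r₂ + 2 * M + m := by linarith
  have hcore : c₀ * (1 + r₁) * θ ^ 2 * ((a + b + c) * (a + r₁))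
      ≤ η * (M ^ 2 * b + 2 * (r₁ * r₂) * (1 - t) * (a + r₁)) := by
    have hprodnn : (0:ℝ) ≤ (a + b + c) * (a + r₁) :=
      mul_nonneg (by linarith) (by linarith)
    rcases le_total r₂ R₀ with hB | hA
    · -- case B : r₂ ≤ R₀
      have f1 : (a + b + c) * (a + r₁) ≤ (4 * R₀ + 2 * M + m) * (M + 2 * R₀) := by
        apply mul_le_mul (by linarith) (by linarith) (by linarith) (by linarith)
      have f2 : c₀ * (1 + r₁) ≤ cB * (1 + R₀) :=
        mul_le_mul hc₀B (by linarith) (by linarith) hcB.le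
      have f3 : c₀ * (1 + r₁) * θ ^ 2 ≤ cB * (1 + R₀) * π ^ 2 :=
        mul_le_mul f2 hθsq (sq_nonneg θ) (by positivity)
      have f4 : c₀ * (1 + r₁) * θ ^ 2 * ((a + b + c) * (a + r₁))
          ≤ cB * (1 + R₀) * π ^ 2 * ((4 * R₀ + 2 * M + m) * (M + 2 * R₀)) := by
        apply mul_le_mul f3 f1 hprodnn (by positivity)
      have f5 : cB * (1 + R₀) * π ^ 2 * ((4 * R₀ + 2 * M + m) * (M + 2 * R₀)) = η * M ^ 3 := by
        linear_combination hcBeq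
      have f6 : η * M ^ 3 ≤ η * (M ^ 2 * b + 2 * (r₁ * r₂) * (1 - t) * (a + r₁)) := by
        have g1 : 0 ≤ η * (M ^ 2 * (b - M)) :=
          mul_nonneg hη0.le (mul_nonneg (sq_nonneg M) (by linarith))
        have g2 : 0 ≤ η * (2 * (r₁ * r₂) * (1 - t) * (a + r₁)) := mul_nonneg hη0.le hT'0
        linarith [g1, g2]
      linarith [f4, f5 ▸ f4, f6]
    · -- case A : R₀ ≤ r₂
      have habc5 : a + b + c ≤ 5 * r₂ := by
        have : 2 * M + m ≤ R₀ := by rw [hR₀eq]; linarith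
        linarith
      rcases le_total r₁ 1 with hA1 | hA2
      · -- A1 : r₁ ≤ 1
        have f1 : (a + b + c) * (a + r₁) ≤ (5 * r₂) * (M + 2) := by
          apply mul_le_mul habc5 (by linarith) (by linarith) (by positivity)
        have f2 : c₀ * (1 + r₁) ≤ cA1 * 2 :=
          mul_le_mul hc₀A1 (by linarith) (by linarith) hcA1.le
        have f3 : c₀ * (1 + r₁) * θ ^ 2 ≤ cA1 * 2 * θ ^ 2 :=
          mul_le_mul_of_nonneg_right f2 (sq_nonneg θ)
        have f4 : c₀ * (1 + r₁) * θ ^ 2 * ((a + b + c) * (a + r₁))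
            ≤ cA1 * 2 * θ ^ 2 * ((5 * r₂) * (M + 2)) := by
          apply mul_le_mul f3 f1 hprodnn (by positivity)
        have f5 : cA1 * 2 * θ ^ 2 * ((5 * r₂) * (M + 2)) = (cA1 * (10 * (M + 2))) * (θ ^ 2 * r₂) := by
          ring
        have f6 : (cA1 * (10 * (M + 2))) * (θ ^ 2 * r₂) ≤ (cA1 * (10 * (M + 2))) * (π ^ 2 * r₂) := by
          apply mul_le_mul_of_nonneg_left (mul_le_mul_of_nonneg_right hθsq hr₂.le) (by positivity)
        have f7 : (cA1 * (10 * (M + 2))) * (π ^ 2 * r₂) = η * M ^ 2 * r₂ := by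
          linear_combination r₂ * hcA1eq
        have f8 : η * M ^ 2 * r₂ ≤ η * (M ^ 2 * b + 2 * (r₁ * r₂) * (1 - t) * (a + r₁)) := by
          have g1 : 0 ≤ η * (M ^ 2 * (b - r₂)) :=
            mul_nonneg hη0.le (mul_nonneg (sq_nonneg M) (by linarith))
          have g2 : 0 ≤ η * (2 * (r₁ * r₂) * (1 - t) * (a + r₁)) := mul_nonneg hη0.le hT'0
          linarith [g1, g2]
        calc c₀ * (1 + r₁) * θ ^ 2 * ((a + b + c) * (a + r₁))
            ≤ cA1 * 2 * θ ^ 2 * ((5 * r₂) * (M + 2)) := f4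
        _ = (cA1 * (10 * (M + 2))) * (θ ^ 2 * r₂) := f5
        _ ≤ (cA1 * (10 * (M + 2))) * (π ^ 2 * r₂) := f6
        _ = η * M ^ 2 * r₂ := f7
        _ ≤ _ := f8
      · -- A2 : 1 ≤ r₁
        have f1 : (a + b + c) * (a + r₁) ≤ (5 * r₂) * ((M + 2) * r₁) := by
          have haub2 : a + r₁ ≤ (M + 2) * r₁ := by
            have := mul_nonneg hM.le (by linarith : (0:ℝ) ≤ r₁ - 1)
            linarith [haub]
          apply mul_le_mul habc5 haub2 (by linarith) (by positivity)
        have f2 : c₀ * (1 + r₁) ≤ cA2 * (2 * r₁) :=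
          mul_le_mul hc₀A2 (by linarith) (by linarith) hcA2.le
        have f3 : c₀ * (1 + r₁) * θ ^ 2 ≤ cA2 * (2 * r₁) * θ ^ 2 :=
          mul_le_mul_of_nonneg_right f2 (sq_nonneg θ)
        have f4 : c₀ * (1 + r₁) * θ ^ 2 * ((a + b + c) * (a + r₁))
            ≤ cA2 * (2 * r₁) * θ ^ 2 * ((5 * r₂) * ((M + 2) * r₁)) := by
          apply mul_le_mul f3 f1 hprodnn (by positivity)
        have f56 : cA2 * (2 * r₁) * θ ^ 2 * ((5 * r₂) * ((M + 2) * r₁))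
            = η * ((2 * (r₁ * r₂) * (2 / π ^ 2 * θ ^ 2)) * r₁) := by
          have hπ2 : (π:ℝ) ^ 2 ≠ 0 := by positivity
          apply mul_right_cancel₀ hπ2
          have h2 : 2 / π ^ 2 * θ ^ 2 * π ^ 2 = 2 * θ ^ 2 := by field_simp
          calc cA2 * (2 * r₁) * θ ^ 2 * ((5 * r₂) * ((M + 2) * r₁)) * π ^ 2
              = cA2 * (5 * (M + 2) * π ^ 2) * (2 * θ ^ 2 * (r₁ ^ 2 * r₂)) := by ring
          _ = 2 * η * (2 * θ ^ 2 * (r₁ ^ 2 * r₂)) := by rw [hcA2eq]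
          _ = η * (2 * (r₁ * r₂) * (2 / π ^ 2 * θ ^ 2 * π ^ 2) * r₁) := by
              rw [h2]; ring
          _ = η * (2 * (r₁ * r₂) * (2 / π ^ 2 * θ ^ 2) * r₁) * π ^ 2 := by ring
        have k1 : 2 * (r₁ * r₂) * (2 / π ^ 2 * θ ^ 2) ≤ 2 * (r₁ * r₂) * (1 - t) :=
          mul_le_mul_of_nonneg_left hJ (by positivity)
        have k2 : (2 * (r₁ * r₂) * (2 / π ^ 2 * θ ^ 2)) * r₁ ≤ (2 * (r₁ * r₂) * (1 - t)) * r₁ :=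
          mul_le_mul_of_nonneg_right k1 hr₁.le
        have k3 : (2 * (r₁ * r₂) * (1 - t)) * r₁ ≤ (2 * (r₁ * r₂) * (1 - t)) * (a + r₁) :=
          mul_le_mul_of_nonneg_left (by linarith) hT0
        have f7 : η * ((2 * (r₁ * r₂) * (2 / π ^ 2 * θ ^ 2)) * r₁)
            ≤ η * (2 * (r₁ * r₂) * (1 - t) * (a + r₁)) := by
          apply mul_le_mul_of_nonneg_left _ hη0.le
          calc (2 * (r₁ * r₂) * (2 / π ^ 2 * θ ^ 2)) * r₁
              ≤ (2 * (r₁ * r₂) * (1 - t)) * r₁ := k2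
          _ ≤ (2 * (r₁ * r₂) * (1 - t)) * (a + r₁) := k3
        have f8 : η * (2 * (r₁ * r₂) * (1 - t) * (a + r₁))
            ≤ η * (M ^ 2 * b + 2 * (r₁ * r₂) * (1 - t) * (a + r₁)) := by
          have g1 : 0 ≤ η * (M ^ 2 * b) :=
            mul_nonneg hη0.le (mul_nonneg (sq_nonneg M) hb0)
          linarith [g1]
        calc c₀ * (1 + r₁) * θ ^ 2 * ((a + b + c) * (a + r₁))
            ≤ cA2 * (2 * r₁) * θ ^ 2 * ((5 * r₂) * ((M + 2) * r₁)) := f4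
        _ = η * ((2 * (r₁ * r₂) * (2 / π ^ 2 * θ ^ 2)) * r₁) := f56
        _ ≤ η * (2 * (r₁ * r₂) * (1 - t) * (a + r₁)) := f7
        _ ≤ _ := f8
  -- finish
  have hD : 0 < (a + b + c) * (a + r₁) :=
    mul_pos (by linarith) (by linarith)
  have hfin : c₀ * (1 + r₁) * θ ^ 2 ≤ |μ| :=
    le_of_mul_le_mul_right (hcore.trans hcomb) hD
  have hsq1 : Real.sqrt (r₁ ^ 2 + 1) ≤ 1 + r₁ := by
    rw [show (1 + r₁ : ℝ) = Real.sqrt ((1 + r₁) ^ 2) from (Real.sqrt_sq (by linarith)).symm]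
    exact Real.sqrt_le_sqrt (by linarith)
  calc c₀ * Real.sqrt (r₁ ^ 2 + 1) * θ ^ 2 ≤ c₀ * (1 + r₁) * θ ^ 2 :=
      mul_le_mul_of_nonneg_right (mul_le_mul_of_nonneg_left hsq1 hc₀.le) (sq_nonneg θ)
  _ ≤ |μ| := hfin


/-- General lower bound: for all signs,
`|μ^{s₁,s₂}(ξ₁,ξ₂)| ≳ min(⟨ξ₁⟩,⟨ξ₂⟩)·∠(s₁ξ₁,s₂ξ₂)²`. -/
theorem resonance_general_lower_bound (m M : ℝ) (hm : 0 < m) (hmM : m < 2 * M) :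
    ∃ C > (0 : ℝ),
      ∀ ξ₁ ξ₂ : EuclideanSpace ℝ (Fin 3), ξ₁ ≠ 0 → ξ₂ ≠ 0 → ∀ s₁ s₂ : ℝ,
        (s₁ = 1 ∨ s₁ = -1) → (s₂ = 1 ∨ s₂ = -1) →
        |resonance m M s₁ s₂ ξ₁ ξ₂| ≥
          C⁻¹ * min (jbracket 1 ξ₁) (jbracket 1 ξ₂) *
            InnerProductGeometry.angle (s₁ • ξ₁) (s₂ • ξ₂) ^ 2 := by
  have hM : 0 < M := by linarith
  obtain ⟨c₀, hc₀, hkey⟩ := scalar_key m M hm hM hmM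
  refine ⟨c₀⁻¹, inv_pos.mpr hc₀, ?_⟩
  have haux : ∀ ξ₁ ξ₂ : EuclideanSpace ℝ (Fin 3), ξ₁ ≠ 0 → ξ₂ ≠ 0 → ∀ s₁ s₂ : ℝ,
      (s₁ = 1 ∨ s₁ = -1) → (s₂ = 1 ∨ s₂ = -1) → ‖ξ₁‖ ≤ ‖ξ₂‖ →
      |resonance m M s₁ s₂ ξ₁ ξ₂| ≥
        c₀ * min (jbracket 1 ξ₁) (jbracket 1 ξ₂) *
          InnerProductGeometry.angle (s₁ • ξ₁) (s₂ • ξ₂) ^ 2 := by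
    intro ξ₁ ξ₂ hξ₁ hξ₂ s₁ s₂ hs₁ hs₂ hle
    set θ := InnerProductGeometry.angle (s₁ • ξ₁) (s₂ • ξ₂) with hθdef
    have hθ0 : 0 ≤ θ := InnerProductGeometry.angle_nonneg _ _
    have hθπ : θ ≤ π := InnerProductGeometry.angle_le_pi _ _
    have hr₁ : 0 < ‖ξ₁‖ := norm_pos_iff.mpr hξ₁
    have hr₂ : 0 < ‖ξ₂‖ := norm_pos_iff.mpr hξ₂
    have hcos := InnerProductGeometry.cos_angle (s₁ • ξ₁) (s₂ • ξ₂)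
    rw [← hθdef] at hcos
    have hinner : (inner ℝ ξ₁ ξ₂ : ℝ)
        = (s₁ * s₂) * (‖ξ₁‖ * ‖ξ₂‖) * Real.cos θ := by
      have hne : (‖ξ₁‖ * ‖ξ₂‖) ≠ 0 := ne_of_gt (mul_pos hr₁ hr₂)
      rw [real_inner_smul_left, real_inner_smul_right] at hcos
      rcases hs₁ with rfl | rfl <;> rcases hs₂ with rfl | rfl <;>
        rw [hcos] <;> simp [norm_smul] <;> (try field_simp)
    have hsub : ‖ξ₁ - ξ₂‖ ^ 2
        = ‖ξ₁‖ ^ 2 + ‖ξ₂‖ ^ 2 - 2 * (s₁ * s₂) * (‖ξ₁‖ * ‖ξ₂‖) * Real.cos θ := by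
      rw [norm_sub_sq_real, hinner]; ring
    have h := hkey ‖ξ₁‖ ‖ξ₂‖ (Real.cos θ) θ s₁ s₂ hr₁ hr₂ hle
      (Real.neg_one_le_cos θ) (Real.cos_le_one θ) hθ0 hθπ (jordan θ hθ0 hθπ) hs₁ hs₂
    have e : resonance m M s₁ s₂ ξ₁ ξ₂
        = Real.sqrt (‖ξ₁‖ ^ 2 + ‖ξ₂‖ ^ 2 - 2 * (s₁ * s₂) * (‖ξ₁‖ * ‖ξ₂‖) * Real.cos θ + m ^ 2)
          + s₁ * Real.sqrt (‖ξ₁‖ ^ 2 + M ^ 2) - s₂ * Real.sqrt (‖ξ₂‖ ^ 2 + M ^ 2) := by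
      unfold resonance jbracket
      rw [hsub]
    rw [ge_iff_le, e]
    calc c₀ * min (jbracket 1 ξ₁) (jbracket 1 ξ₂) * θ ^ 2
        ≤ c₀ * jbracket 1 ξ₁ * θ ^ 2 :=
          mul_le_mul_of_nonneg_right
            (mul_le_mul_of_nonneg_left (min_le_left _ _) hc₀.le) (sq_nonneg θ)
    _ = c₀ * Real.sqrt (‖ξ₁‖ ^ 2 + 1) * θ ^ 2 := by unfold jbracket; norm_num
    _ ≤ _ := h
  intro ξ₁ ξ₂ hξ₁ hξ₂ s₁ s₂ hs₁ hs₂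
  rw [inv_inv]
  rcases le_total ‖ξ₁‖ ‖ξ₂‖ with h | h
  · exact haux ξ₁ ξ₂ hξ₁ hξ₂ s₁ s₂ hs₁ hs₂ h
  · have hs₂' : (-s₂ : ℝ) = 1 ∨ (-s₂ : ℝ) = -1 := by
      rcases hs₂ with rfl | rfl
      · right; norm_num
      · left; norm_num
    have hs₁' : (-s₁ : ℝ) = 1 ∨ (-s₁ : ℝ) = -1 := by
      rcases hs₁ with rfl | rfl
      · right; norm_num
      · left; norm_num
    have h2 := haux ξ₂ ξ₁ hξ₂ hξ₁ (-s₂) (-s₁) hs₂' hs₁' h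
    have e1 : resonance m M (-s₂) (-s₁) ξ₂ ξ₁ = resonance m M s₁ s₂ ξ₁ ξ₂ := by
      unfold resonance jbracket
      rw [norm_sub_rev ξ₂ ξ₁]
      ring
    have e2 : InnerProductGeometry.angle ((-s₂) • ξ₂) ((-s₁) • ξ₁)
        = InnerProductGeometry.angle (s₁ • ξ₁) (s₂ • ξ₂) := by
      rw [neg_smul, neg_smul, InnerProductGeometry.angle_neg_neg,
        InnerProductGeometry.angle_comm]
    rw [e1, e2, min_comm (jbracket 1 ξ₂) (jbracket 1 ξ₁)] at h2
    exact h2
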